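/- Let V be a finite-dimensional complex vector space (a subspace of a complex *-algebra suffices), and let z^0,...,z^3 be elements of a complex *-algebra A such that Σ_{μ=0}^{3} ((z^μ)* ⊗ z^μ − z^μ ⊗ (z^μ)*) = 0 in A ⊗ A. Then there exists a symmetric unitary matrix Λ ∈ M_4(ℂ) such that (z^μ)* = Σ_ν Λ^μ_ν z^ν for all μ. -/

import Mathlib

open scoped TensorProduct

open Matrix in
theorem aux_key {n : ℕ} (q : Fin n → EuclideanSpace ℂ (Fin 4))
    (hq : ∀ a b, (starRingEnd ℂ) (inner (𝕜 := ℂ) (q a) (q b)) = inner (𝕜 := ℂ) (q a) (q b)) :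
    ∃ Λ : Matrix (Fin 4) (Fin 4) ℂ, Λ.IsSymm ∧ Λ ∈ Matrix.unitaryGroup (Fin 4) ℂ ∧
      ∀ i ν, (∑ μ : Fin 4, Λ ν μ * (starRingEnd ℂ) (q i μ)) = q i ν := by
  classical
  letI : InnerProductSpace ℝ (EuclideanSpace ℂ (Fin 4)) :=
    InnerProductSpace.rclikeToReal ℂ (EuclideanSpace ℂ (Fin 4))
  set W : Submodule ℝ (EuclideanSpace ℂ (Fin 4)) := Submodule.span ℝ (Set.range q) with hW
  haveI : FiniteDimensional ℝ W := FiniteDimensional.span_of_finite ℝ (Set.finite_range q)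
  have hsmul : ∀ (r : ℝ) (x : EuclideanSpace ℂ (Fin 4)), r • x = (r : ℂ) • x := fun r x => rfl
  have hreal : ∀ x ∈ W, ∀ y ∈ W,
      (starRingEnd ℂ) (inner (𝕜 := ℂ) x y) = inner (𝕜 := ℂ) x y := by
    intro x hx y hy
    induction hx, hy using Submodule.span_induction₂ with
    | mem_mem x y hx hy =>
      obtain ⟨a, rfl⟩ := hx; obtain ⟨b, rfl⟩ := hy; exact hq a b
    | zero_left y hy => simp
    | zero_right x hx => simp
    | add_left x y z hx hy hz h1 h2 => rw [inner_add_left, map_add, h1, h2]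
    | add_right x y z hx hy hz h1 h2 => rw [inner_add_right, map_add, h1, h2]
    | smul_left r x y hx hy h1 =>
      rw [hsmul, inner_smul_left, RingHom.map_mul, h1]
      simp only [Complex.conj_conj, Complex.conj_ofReal]
    | smul_right r x y hx hy h1 =>
      rw [hsmul, inner_smul_right, RingHom.map_mul, h1]
      simp only [Complex.conj_ofReal]
  -- orthonormal real basis of W, complex-orthonormal in E
  set k := Module.finrank ℝ W with hk
  set B0 := stdOrthonormalBasis ℝ W with hB0
  set f : Fin k → EuclideanSpace ℂ (Fin 4) := fun j => ((B0 j : W) : EuclideanSpace ℂ (Fin 4))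
    with hf
  have hfW : ∀ j, f j ∈ W := fun j => (B0 j : W).2
  have hfon : ∀ a b, inner (𝕜 := ℂ) (f a) (f b) = if a = b then (1 : ℂ) else 0 := by
    intro a b
    have h1 : inner (𝕜 := ℝ) (B0 a) (B0 b) = if a = b then (1 : ℝ) else 0 :=
      orthonormal_iff_ite.mp B0.orthonormal a b
    have h2 : inner (𝕜 := ℝ) (B0 a) (B0 b) = Complex.re (inner (𝕜 := ℂ) (f a) (f b)) := rfl
    have h3 := hreal _ (hfW a) _ (hfW b)
    have him : (inner (𝕜 := ℂ) (f a) (f b)).im = 0 := by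
      have := congrArg Complex.im h3
      simp only [Complex.conj_im] at this
      linarith
    apply Complex.ext
    · rw [← h2, h1]; split <;> simp
    · rw [him]; split <;> simp
  have hfon' : Orthonormal ℂ f := orthonormal_iff_ite.mpr hfon
  have hk4 : k ≤ 4 := by
    have h1 := hfon'.linearIndependent.fintype_card_le_finrank
    simpa using h1
  set v : Fin 4 → EuclideanSpace ℂ (Fin 4) :=
    fun j => if h : (j : ℕ) < k then f ⟨j, h⟩ else 0 with hv
  set s : Set (Fin 4) := {j : Fin 4 | (j : ℕ) < k} with hs
  have hvon : Orthonormal ℂ (s.restrict v) := by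
    rw [orthonormal_iff_ite]
    rintro ⟨a, ha⟩ ⟨b, hb⟩
    have ha' : (a : ℕ) < k := ha
    have hb' : (b : ℕ) < k := hb
    have e1 : s.restrict v ⟨a, ha⟩ = f ⟨a, ha'⟩ := by
      exact dif_pos ha'
    have e2 : s.restrict v ⟨b, hb⟩ = f ⟨b, hb'⟩ := by
      exact dif_pos hb'
    rw [e1, e2, hfon]
    by_cases hab : a = b
    · subst hab; simp
    · rw [if_neg, if_neg]
      · simp [Subtype.ext_iff, hab]
      · exact fun hc => hab (Fin.ext (congrArg (Fin.val (n := k)) hc))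
  obtain ⟨bb, hbb⟩ := Orthonormal.exists_orthonormalBasis_extension_of_card_eq (by simp) hvon
  set F : Matrix (Fin 4) (Fin 4) ℂ := Matrix.of (fun μ j => bb j μ) with hF
  have hbON : ∀ a c, (∑ μ : Fin 4, (starRingEnd ℂ) (bb a μ) * bb c μ)
      = if a = c then (1 : ℂ) else 0 := by
    intro a c
    have h1 := orthonormal_iff_ite.mp bb.orthonormal a c
    simpa [PiLp.inner_apply, RCLike.inner_apply, mul_comm] using h1
  set Λ : Matrix (Fin 4) (Fin 4) ℂ := F * F.transpose with hΛ
  have hsymm : Λ.IsSymm := by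
    rw [Matrix.IsSymm, hΛ, Matrix.transpose_mul, Matrix.transpose_transpose]
  have hFunit : F.conjTranspose * F = 1 := by
    ext a c
    simp only [Matrix.mul_apply, Matrix.conjTranspose_apply, Matrix.one_apply, hF, Matrix.of_apply,
      Matrix.star_apply, RCLike.star_def]
    exact hbON a c
  have hFunit' : F * F.conjTranspose = 1 := mul_eq_one_comm.mp hFunit
  have htc : (F.transpose).conjTranspose = (F.conjTranspose).transpose := by
    ext a c
    simp [Matrix.conjTranspose_apply, Matrix.transpose_apply]
  have h5 : (F.transpose).conjTranspose * F.transpose = 1 := by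
    rw [htc, ← Matrix.transpose_mul, hFunit', Matrix.transpose_one]
  have hstar : star Λ * Λ = 1 := by
    show Λ.conjTranspose * Λ = 1
    rw [hΛ, Matrix.conjTranspose_mul, Matrix.mul_assoc, ← Matrix.mul_assoc F.conjTranspose,
      hFunit, Matrix.one_mul, h5]
  have hunit : Λ ∈ Matrix.unitaryGroup (Fin 4) ℂ := ⟨hstar, mul_eq_one_comm.mp hstar⟩
  -- key property: Λ applied to conjugates of basis vectors
  have hΛb : ∀ (a : Fin 4) (ν : Fin 4),
      (∑ μ : Fin 4, Λ ν μ * (starRingEnd ℂ) (bb a μ)) = bb a ν := by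
    intro a ν
    have hinner : ∀ c : Fin 4, (∑ μ : Fin 4, F μ c * (starRingEnd ℂ) (bb a μ))
        = if a = c then 1 else 0 := by
      intro c
      rw [← hbON a c]
      exact Finset.sum_congr rfl fun μ _ => mul_comm _ _
    calc (∑ μ : Fin 4, Λ ν μ * (starRingEnd ℂ) (bb a μ))
        = ∑ μ : Fin 4, (∑ c : Fin 4, F ν c * F μ c) * (starRingEnd ℂ) (bb a μ) := by
          refine Finset.sum_congr rfl fun μ _ => ?_
          rw [hΛ, Matrix.mul_apply]
          simp [Matrix.transpose_apply]
      _ = ∑ c : Fin 4, F ν c * (∑ μ : Fin 4, F μ c * (starRingEnd ℂ) (bb a μ)) := by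
          simp_rw [Finset.sum_mul, Finset.mul_sum]
          rw [Finset.sum_comm]
          simp_rw [mul_assoc]
      _ = ∑ c : Fin 4, F ν c * (if a = c then 1 else 0) := by
          simp_rw [hinner]
      _ = F ν a := by simp
      _ = bb a ν := rfl
  have hbf : ∀ (j : Fin k), bb ⟨(j : ℕ), lt_of_lt_of_le j.2 hk4⟩ = f j := by
    intro j
    have hmem : (⟨(j : ℕ), lt_of_lt_of_le j.2 hk4⟩ : Fin 4) ∈ s := j.2
    rw [hbb _ hmem]
    simp only [hv]
    rw [dif_pos (show ((⟨(j : ℕ), lt_of_lt_of_le j.2 hk4⟩ : Fin 4) : ℕ) < k from j.2)]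
  have hΛf : ∀ (j : Fin k) (ν : Fin 4),
      (∑ μ : Fin 4, Λ ν μ * (starRingEnd ℂ) (f j μ)) = f j ν := by
    intro j ν
    rw [← hbf j]
    exact hΛb _ ν
  have hspanf : Submodule.span ℝ (Set.range f) = W := by
    have h1 : Set.range f = W.subtype '' Set.range ⇑B0.toBasis := by
      rw [B0.coe_toBasis]
      ext x
      constructor
      · rintro ⟨j, rfl⟩; exact ⟨B0 j, ⟨j, rfl⟩, rfl⟩
      · rintro ⟨y, ⟨j, rfl⟩, rfl⟩; exact ⟨j, rfl⟩
    rw [h1, Submodule.span_image, B0.toBasis.span_eq, Submodule.map_subtype_top]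
  refine ⟨Λ, hsymm, hunit, ?_⟩
  intro i ν
  have hqW : q i ∈ Submodule.span ℝ (Set.range f) := by
    rw [hspanf]
    exact Submodule.subset_span ⟨i, rfl⟩
  obtain ⟨r, hr⟩ := (Submodule.mem_span_range_iff_exists_fun ℝ).mp hqW
  have hcomp : ∀ μ, q i μ = ∑ j : Fin k, (r j : ℂ) * f j μ := by
    intro μ
    have h2 : (∑ j : Fin k, r j • f j) μ = q i μ := by rw [hr]
    rw [← h2, show (∑ j : Fin k, r j • f j) μ = ∑ j : Fin k, (r j • f j) μ from
      by rw [WithLp.ofLp_sum, Finset.sum_apply]]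
    refine Finset.sum_congr rfl fun j _ => ?_
    rw [hsmul]
    rfl
  calc (∑ μ : Fin 4, Λ ν μ * (starRingEnd ℂ) (q i μ))
      = ∑ μ : Fin 4, Λ ν μ * ∑ j : Fin k, (r j : ℂ) * (starRingEnd ℂ) (f j μ) := by
        refine Finset.sum_congr rfl fun μ _ => ?_
        rw [hcomp μ, map_sum]
        simp_rw [_root_.map_mul, Complex.conj_ofReal]
    _ = ∑ j : Fin k, (r j : ℂ) * ∑ μ : Fin 4, Λ ν μ * (starRingEnd ℂ) (f j μ) := by
        simp_rw [Finset.mul_sum]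
        rw [Finset.sum_comm]
        simp_rw [mul_left_comm]
    _ = ∑ j : Fin k, (r j : ℂ) * f j ν := by simp_rw [hΛf]
    _ = q i ν := (hcomp ν).symm


/-- If Σ_μ ((z^μ)* ⊗ z^μ − z^μ ⊗ (z^μ)*) = 0 in A ⊗ A, then there is a
symmetric unitary Λ ∈ M₄(ℂ) with (z^μ)* = Σ_ν Λ^μ_ν z^ν. -/
theorem stmt_1 {A : Type*} [Ring A] [Algebra ℂ A] [StarRing A] [StarModule ℂ A]
    (z : Fin 4 → A)
    (h : ∑ μ : Fin 4, (star (z μ) ⊗ₜ[ℂ] z μ - z μ ⊗ₜ[ℂ] star (z μ)) = 0) :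
    ∃ Λ : Matrix (Fin 4) (Fin 4) ℂ,
      Λ.IsSymm ∧ Λ ∈ Matrix.unitaryGroup (Fin 4) ℂ ∧
      ∀ μ : Fin 4, star (z μ) = ∑ ν : Fin 4, Λ μ ν • z ν := by
  classical
  set w : Fin 4 ⊕ Fin 4 → A := Sum.elim
    (fun μ => (2⁻¹ : ℂ) • (z μ + star (z μ)))
    (fun μ => (-(2⁻¹ : ℂ) * Complex.I) • (z μ - star (z μ))) with hw
  have hwstar : ∀ j, star (w j) = w j := by
    rintro (μ | μ) <;>
      simp only [hw, Sum.elim_inl, Sum.elim_inr, star_smul, star_add, star_sub, star_star,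
        RCLike.star_def, map_mul, map_neg, map_inv₀, Complex.conj_I, Complex.conj_ofNat]
    · rw [add_comm]
    · rw [show ((-2⁻¹ : ℂ) * -Complex.I) = -(-2⁻¹ * Complex.I) from by ring,
        neg_smul, ← smul_neg, neg_sub]
  have hzmem : ∀ μ, z μ ∈ Submodule.span ℂ (Set.range w) := by
    intro μ
    have hz : z μ = w (Sum.inl μ) + Complex.I • w (Sum.inr μ) := by
      simp only [hw, Sum.elim_inl, Sum.elim_inr, smul_smul]
      rw [show Complex.I * (-2⁻¹ * Complex.I) = 2⁻¹ from by
        rw [mul_comm, mul_assoc, Complex.I_mul_I]; ring]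
      module
    rw [hz]
    exact Submodule.add_mem _ (Submodule.subset_span ⟨Sum.inl μ, rfl⟩)
      (Submodule.smul_mem _ _ (Submodule.subset_span ⟨Sum.inr μ, rfl⟩))
  obtain ⟨bset, hbsub, hbspan, hbli⟩ := exists_linearIndependent ℂ (Set.range w)
  have hbfin : bset.Finite := (Set.finite_range w).subset hbsub
  haveI := hbfin.fintype
  set n := Fintype.card bset with hn
  set eqv := Fintype.equivFin bset with heqv
  set e : Fin n → A := fun i => ((eqv.symm i : bset) : A) with he
  have he_star : ∀ i, star (e i) = e i := by
    intro i
    obtain ⟨j, hj⟩ := hbsub (eqv.symm i).2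
    show star ((eqv.symm i : bset) : A) = ((eqv.symm i : bset) : A)
    rw [← hj, hwstar]
  have he_li : LinearIndependent ℂ e := hbli.comp eqv.symm eqv.symm.injective
  have hrange : Set.range e = bset := by
    ext x
    constructor
    · rintro ⟨i, rfl⟩; exact (eqv.symm i).2
    · intro hx; exact ⟨eqv ⟨x, hx⟩, by simp [he]⟩
  have he_span : ∀ μ, z μ ∈ Submodule.span ℂ (Set.range e) := by
    intro μ
    rw [hrange, hbspan]
    exact hzmem μ
  have hP' : ∀ μ, ∃ c : Fin n → ℂ, ∑ i, c i • e i = z μ := fun μ =>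
    (Submodule.mem_span_range_iff_exists_fun ℂ).mp (he_span μ)
  choose P hPz using hP'
  have hstarz : ∀ μ, star (z μ) = ∑ i, (starRingEnd ℂ) (P μ i) • e i := by
    intro μ
    rw [← hPz μ, star_sum]
    refine Finset.sum_congr rfl fun i _ => ?_
    rw [star_smul, he_star]
    rfl
  -- dual functionals
  set BB := Module.Basis.extend hbli with hBB
  have hmemext : ∀ i, e i ∈ LinearIndepOn.extend (K := ℂ) (v := id) (s := bset) hbli (Set.subset_univ bset) := by
    intro i
    exact LinearIndepOn.subset_extend (K := ℂ) (v := id) (s := bset) hbli _ ((hrange ▸ ⟨i, rfl⟩ : e i ∈ bset))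
  set φ : Fin n → (A →ₗ[ℂ] ℂ) := fun i => BB.coord ⟨e i, hmemext i⟩ with hφdef
  have hφ : ∀ a i, φ a (e i) = if a = i then 1 else 0 := by
    intro a i
    have h1 : e i = BB ⟨e i, hmemext i⟩ := (Module.Basis.extend_apply_self hbli ⟨e i, hmemext i⟩).symm
    rw [hφdef]
    simp only
    rw [h1, Module.Basis.coord_apply, Module.Basis.repr_self, Finsupp.single_apply]
    have hiff : (⟨e i, hmemext i⟩ : LinearIndepOn.extend (K := ℂ) (v := id) (s := bset) hbli (Set.subset_univ bset))
        = ⟨e a, hmemext a⟩ ↔ a = i := by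
      constructor
      · intro hcontra
        have hval : e i = e a := by
          have := congrArg (fun (x : ↥(LinearIndepOn.extend (K := ℂ) (v := id) (s := bset) hbli (Set.subset_univ bset))) => (x : A)) hcontra
          simpa using this
        exact (he_li.injective hval).symm
      · rintro rfl; rfl
    by_cases hai : a = i
    · rw [if_pos (hiff.mpr hai), if_pos hai]
    · rw [if_neg (fun hc => hai (hiff.mp hc)), if_neg hai]
  set ψ : Fin n → Fin n → (TensorProduct ℂ A A →ₗ[ℂ] ℂ) := fun a b =>
    TensorProduct.lift ((LinearMap.mul ℂ ℂ).compl₁₂ (φ a) (φ b)) with hψdef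
  have hψ : ∀ a b (x y : A), ψ a b (x ⊗ₜ[ℂ] y) = φ a x * φ b y := by
    intro a b x y
    simp [hψdef]
  have hφz : ∀ a μ, φ a (z μ) = P μ a := by
    intro a μ
    rw [← hPz μ, map_sum]
    simp_rw [map_smul, hφ, smul_eq_mul, mul_ite, mul_one, mul_zero]
    simp
  have hφsz : ∀ a μ, φ a (star (z μ)) = (starRingEnd ℂ) (P μ a) := by
    intro a μ
    rw [hstarz μ, map_sum]
    simp_rw [map_smul, hφ, smul_eq_mul, mul_ite, mul_one, mul_zero]
    simp
  have key : ∀ a b : Fin n,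
      (∑ μ : Fin 4, (starRingEnd ℂ) (P μ a) * P μ b)
        = ∑ μ : Fin 4, P μ a * (starRingEnd ℂ) (P μ b) := by
    intro a b
    have h0 := congrArg (ψ a b) h
    rw [map_sum, map_zero] at h0
    simp_rw [map_sub, hψ, hφz, hφsz] at h0
    rw [← sub_eq_zero, ← Finset.sum_sub_distrib]
    exact h0
  -- apply the Euclidean-space lemma
  set q : Fin n → EuclideanSpace ℂ (Fin 4) := fun i =>
    WithLp.toLp 2 (fun μ => (starRingEnd ℂ) (P μ i) : Fin 4 → ℂ) with hqdef
  have hq : ∀ a b, (starRingEnd ℂ) (inner (𝕜 := ℂ) (q a) (q b)) = inner (𝕜 := ℂ) (q a) (q b) := by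
    intro a b
    have hib : inner (𝕜 := ℂ) (q a) (q b) = ∑ μ : Fin 4, P μ a * (starRingEnd ℂ) (P μ b) := by
      rw [PiLp.inner_apply]
      refine Finset.sum_congr rfl fun μ _ => ?_
      rw [RCLike.inner_apply]
      simp [hqdef, mul_comm]
    rw [hib, map_sum]
    simp_rw [_root_.map_mul, Complex.conj_conj]
    rw [← key a b]
  obtain ⟨Λ, hsymm, hunit, hkey⟩ := aux_key q hq
  refine ⟨Λ, hsymm, hunit, ?_⟩
  intro μ
  rw [hstarz μ]
  calc (∑ i, (starRingEnd ℂ) (P μ i) • e i)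
      = ∑ i, (∑ ν : Fin 4, Λ μ ν * P ν i) • e i := by
        refine Finset.sum_congr rfl fun i _ => ?_
        congr 1
        have h1 := hkey i μ
        simp only [hqdef, WithLp.ofLp_toLp, Complex.conj_conj] at h1
        exact h1.symm
    _ = ∑ ν : Fin 4, Λ μ ν • z ν := by
        have hzz : ∀ ν, Λ μ ν • z ν = ∑ i, (Λ μ ν * P ν i) • e i := by
          intro ν
          rw [← hPz ν, Finset.smul_sum]
          simp_rw [smul_smul]
        rw [show (∑ ν : Fin 4, Λ μ ν • z ν) = ∑ ν : Fin 4, ∑ i, (Λ μ ν * P ν i) • e i from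
          Finset.sum_congr rfl fun ν _ => hzz ν, Finset.sum_comm]
        refine Finset.sum_congr rfl fun i _ => ?_
        rw [Finset.sum_smul]
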